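/- Let N ∈ ℕ, let μ_i > 0 and b_i > 0 for 0 ≤ i ≤ N, and set ν_i = 1/(μ_i b_i). Fix integers 0 ≤ n ≤ m ≤ N, and define f : {0,…,N+1} → ℝ by f_i = ∑_{k=max(i,n)}^m ν_k for i ≤ m and f_i = 0 for i > m. Then (i) ∑_{i=0}^N μ_i b_i (f_{i+1} − f_i)² = ∑_{k=n}^m ν_k, and (ii) ∑_{i=0}^N μ_i f_i² ≥ (∑_{j=0}^n μ_j)·(∑_{k=n}^m ν_k)². Consequently ∑_{i=0}^N μ_i f_i² ≥ (∑_{j=0}^n μ_j)(∑_{k=n}^m ν_k)·∑_{i=0}^N μ_i b_i (f_{i+1} − f_i)². -/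

import Mathlib

/-- Explicit test-function computation proving the upper basic estimate
`λ₀ ≤ δ⁻¹` for the first Dirichlet eigenvalue of a birth–death process:
with `f i = ∑_{k = max i n}^m ν k` for `i ≤ m`, `f i = 0` for `i > m`,
one computes the Dirichlet form and bounds the `L²`-norm from below. -/
theorem stmt_2 (N n m : ℕ) (hnm : n ≤ m) (hmN : m ≤ N) (μ b : ℕ → ℝ)
    (hμ : ∀ i ≤ N, 0 < μ i) (hb : ∀ i ≤ N, 0 < b i)
    (f : ℕ → ℝ)
    (hf1 : ∀ i ≤ m, f i = ∑ k ∈ Finset.Icc (max i n) m, 1 / (μ k * b k))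
    (hf2 : ∀ i, m < i → f i = 0) :
    (∑ i ∈ Finset.range (N + 1), μ i * b i * (f (i + 1) - f i) ^ 2 =
        ∑ k ∈ Finset.Icc n m, 1 / (μ k * b k)) ∧
    ((∑ j ∈ Finset.range (n + 1), μ j) * (∑ k ∈ Finset.Icc n m, 1 / (μ k * b k)) ^ 2 ≤
        ∑ i ∈ Finset.range (N + 1), μ i * f i ^ 2) ∧
    ((∑ j ∈ Finset.range (n + 1), μ j) * (∑ k ∈ Finset.Icc n m, 1 / (μ k * b k)) *
        (∑ i ∈ Finset.range (N + 1), μ i * b i * (f (i + 1) - f i) ^ 2) ≤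
        ∑ i ∈ Finset.range (N + 1), μ i * f i ^ 2) := by
  have hμb : ∀ i ≤ N, (0:ℝ) < μ i * b i := fun i hi => mul_pos (hμ i hi) (hb i hi)
  set S := ∑ k ∈ Finset.Icc n m, 1 / (μ k * b k) with hS
  have h1 : ∑ i ∈ Finset.range (N+1), μ i * b i * (f (i+1) - f i)^2 = S := by
    have key : ∀ i ∈ Finset.range (N+1),
        μ i * b i * (f (i+1) - f i)^2
          = if i ∈ Finset.Icc n m then 1/(μ i * b i) else 0 := by
      intro i hi
      rw [Finset.mem_range, Nat.lt_succ_iff] at hi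
      by_cases him : i ≤ m
      · by_cases hin : n ≤ i
        · rw [if_pos (Finset.mem_Icc.mpr ⟨hin, him⟩)]
          have hfi : f i = ∑ k ∈ Finset.Icc i m, 1/(μ k * b k) := by
            rw [hf1 i him, max_eq_left hin]
          have hdiff : f (i+1) - f i = -(1/(μ i * b i)) := by
            by_cases h1m : i + 1 ≤ m
            · rw [hf1 (i+1) h1m, max_eq_left (le_trans hin (Nat.le_succ i)), hfi,
                show Finset.Icc i m = insert i (Finset.Icc (i+1) m) by
                  rw [Finset.Icc_add_one_left_eq_Ioc, Finset.Ioc_insert_left him],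
                Finset.sum_insert (by simp [Finset.Icc_add_one_left_eq_Ioc])]
              ring
            · have him' : i = m := by omega
              rw [hf2 (i+1) (by omega), hfi, him']
              simp
          rw [hdiff]
          have := hμb i hi
          field_simp
        · push_neg at hin
          rw [if_neg (by simp only [Finset.mem_Icc]; omega)]
          have hfi : f i = S := by rw [hf1 i him, max_eq_right (le_of_lt hin)]
          have hfi1 : f (i+1) = S := by
            rw [hf1 (i+1) (by omega), max_eq_right hin]
          rw [hfi, hfi1]; ring
      · push_neg at him
        rw [if_neg (by simp only [Finset.mem_Icc]; omega),
          hf2 i him, hf2 (i+1) (by omega)]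
        ring
    rw [Finset.sum_congr rfl key, Finset.sum_ite_mem,
      Finset.inter_eq_right.mpr (fun x hx => by
        rw [Finset.mem_Icc] at hx; rw [Finset.mem_range]; omega)]
  have h2 : (∑ j ∈ Finset.range (n+1), μ j) * S^2
      ≤ ∑ i ∈ Finset.range (N+1), μ i * f i^2 := by
    have heq : (∑ j ∈ Finset.range (n+1), μ j) * S^2
        = ∑ i ∈ Finset.range (n+1), μ i * f i^2 := by
      rw [Finset.sum_mul]
      refine Finset.sum_congr rfl fun i hi => ?_
      rw [Finset.mem_range, Nat.lt_succ_iff] at hi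
      rw [hf1 i (le_trans hi hnm), max_eq_right hi, ← hS]
    rw [heq]
    refine Finset.sum_le_sum_of_subset_of_nonneg
      (Finset.range_subset_range.mpr (by omega)) fun i hi _ => ?_
    rw [Finset.mem_range, Nat.lt_succ_iff] at hi
    exact mul_nonneg (hμ i hi).le (sq_nonneg _)
  refine ⟨h1, h2, ?_⟩
  rw [h1, mul_assoc, ← sq]
  exact h2
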